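/- Let f : [-r,T] → ℝ be measurable and λ ≥ 1. Then sup_{t∈[0,T]} e^{-λt} ∫₀ᵗ (sup_{-r ≤ u ≤ s}|f(u)|) (t-s)^{-α} ds ≤ λ^{α-1} Γ(1-α) · sup_{-r ≤ u ≤ T} |f(u)| e^{-λu}. -/

import Mathlib

open Real MeasureTheory intervalIntegral

/-- `sup_{t∈[0,T]} e^{-λt} ∫₀ᵗ (sup_{-r≤u≤s}|f(u)|)(t-s)^{-α} ds
      ≤ λ^{α-1} Γ(1-α) sup_{-r≤u≤T}|f(u)|e^{-λu}`. -/
theorem stmt_8 (α r T lam : ℝ) (hα : 0 < α) (hα1 : α < 1) (hr : 0 ≤ r) (hT : 0 < T)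
    (hlam : 1 ≤ lam) (f : ℝ → ℝ) (hf : Measurable f)
    (M : ℝ) (hfb : ∀ u ∈ Set.Icc (-r) T, |f u| ≤ M) :
    ∀ t ∈ Set.Icc (0:ℝ) T,
      Real.exp (-lam * t) *
        (∫ s in (0:ℝ)..t, sSup ((fun u => |f u|) '' Set.Icc (-r) s) * (t - s) ^ (-α)) ≤
      lam ^ (α - 1) * Real.Gamma (1 - α) *
        sSup ((fun u => |f u| * Real.exp (-lam * u)) '' Set.Icc (-r) T) := by
  intro t ht
  obtain ⟨ht0, htT⟩ := ht
  have hlam0 : (0:ℝ) < lam := lt_of_lt_of_le one_pos hlam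
  have hrT : -r ≤ T := by linarith
  set S := sSup ((fun u => |f u| * Real.exp (-lam * u)) '' Set.Icc (-r) T) with hSdef
  have hbddS : BddAbove ((fun u => |f u| * Real.exp (-lam * u)) '' Set.Icc (-r) T) := by
    refine ⟨M * Real.exp (lam * r), ?_⟩
    rintro x ⟨u, hu, rfl⟩
    have h1 : |f u| ≤ M := hfb u hu
    have h2 : Real.exp (-lam * u) ≤ Real.exp (lam * r) := by
      apply Real.exp_le_exp.2; nlinarith [hu.1]
    have h0 : (0:ℝ) ≤ |f u| := abs_nonneg _
    exact mul_le_mul h1 h2 (Real.exp_pos _).le (h0.trans h1)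
  have hS0 : 0 ≤ S := by
    have hmem : |f 0| * Real.exp (-lam * 0) ∈
        (fun u => |f u| * Real.exp (-lam * u)) '' Set.Icc (-r) T :=
      Set.mem_image_of_mem _ ⟨by linarith, hT.le⟩
    refine le_trans ?_ (le_csSup hbddS hmem)
    positivity
  -- monotone version of g
  set g : ℝ → ℝ := fun s => sSup ((fun u => |f u|) '' Set.Icc (-r) (min s T)) with hgdef
  have hMb : ∀ s : ℝ, BddAbove ((fun u => |f u|) '' Set.Icc (-r) (min s T)) := by
    intro s
    refine ⟨M, ?_⟩
    rintro x ⟨u, hu, rfl⟩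
    exact hfb u ⟨hu.1, le_trans hu.2 (min_le_right _ _)⟩
  have hgmono : Monotone g := by
    intro s1 s2 hs
    rcases lt_or_ge s1 (-r) with h | h
    · have hemp : Set.Icc (-r) (min s1 T) = ∅ := by
        apply Set.Icc_eq_empty
        simp only [not_le]
        exact lt_of_le_of_lt (min_le_left _ _) h
      simp only [hgdef, hemp, Set.image_empty, Real.sSup_empty]
      rcases lt_or_ge s2 (-r) with h2 | h2
      · have hemp2 : Set.Icc (-r) (min s2 T) = ∅ := by
          apply Set.Icc_eq_empty
          simp only [not_le]
          exact lt_of_le_of_lt (min_le_left _ _) h2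
        simp [hemp2]
      · have hne : ((fun u => |f u|) '' Set.Icc (-r) (min s2 T)).Nonempty :=
          (Set.nonempty_Icc.2 (le_min h2 hrT)).image _
        obtain ⟨x, hx⟩ := hne
        obtain ⟨u, _, rfl⟩ := hx
        exact le_trans (abs_nonneg _) (le_csSup (hMb s2) (Set.mem_image_of_mem _ ‹_›))
    · apply csSup_le_csSup (hMb s2)
      · exact (Set.nonempty_Icc.2 (le_min h hrT)).image _
      · exact Set.image_mono (Set.Icc_subset_Icc le_rfl (min_le_min hs le_rfl))
  have hg_le : ∀ s ∈ Set.Icc (0:ℝ) T, g s ≤ S * Real.exp (lam * s) := by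
    intro s hs
    apply csSup_le ((Set.nonempty_Icc.2 (le_min (by linarith [hs.1]) hrT)).image _)
    rintro x ⟨u, hu, rfl⟩
    have huT : u ∈ Set.Icc (-r) T := ⟨hu.1, le_trans hu.2 (min_le_right _ _)⟩
    have h1 : |f u| * Real.exp (-lam * u) ≤ S :=
      le_csSup hbddS (Set.mem_image_of_mem _ huT)
    have h2 : Real.exp (lam * u) ≤ Real.exp (lam * s) := by
      apply Real.exp_le_exp.2
      have : u ≤ s := le_trans hu.2 (min_le_left _ _)
      nlinarith
    have h3 : |f u| = (|f u| * Real.exp (-lam * u)) * Real.exp (lam * u) := by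
      rw [mul_assoc, ← Real.exp_add]; simp
    show |f u| ≤ S * Real.exp (lam * s)
    have h4 : 0 ≤ |f u| * Real.exp (-lam * u) := by positivity
    rw [h3]
    nlinarith [Real.exp_pos (lam * u), Real.exp_pos (lam * s)]
  have hg_nonneg : ∀ s ∈ Set.Icc (0:ℝ) T, 0 ≤ g s := by
    intro s hs
    have hne : (0:ℝ) ∈ Set.Icc (-r) (min s T) := ⟨by linarith, le_min hs.1 hT.le⟩
    exact le_trans (abs_nonneg _) (le_csSup (hMb s) (Set.mem_image_of_mem _ hne))
  have hgM : ∀ s : ℝ, g s ≤ max M 0 := by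
    intro s
    rcases lt_or_ge s (-r) with h | h
    · have hemp : Set.Icc (-r) (min s T) = ∅ := by
        apply Set.Icc_eq_empty
        simp only [not_le]
        exact lt_of_le_of_lt (min_le_left _ _) h
      simp [hgdef, hemp, Real.sSup_empty]
    · apply csSup_le ((Set.nonempty_Icc.2 (le_min h hrT)).image _)
      rintro x ⟨u, hu, rfl⟩
      exact le_trans (hfb u ⟨hu.1, le_trans hu.2 (min_le_right _ _)⟩) (le_max_left _ _)
  -- integrability of the power kernel
  have hpow_int : IntervalIntegrable (fun s => (t - s) ^ (-α)) volume 0 t := by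
    have h1 : IntervalIntegrable (fun x : ℝ => x ^ (-α)) volume (t - t) (t - 0) :=
      intervalIntegral.intervalIntegrable_rpow' (by linarith)
    simpa using (h1.comp_sub_left t).symm
  have hpow_nonneg : ∀ s ∈ Set.Icc (0:ℝ) t, 0 ≤ (t - s) ^ (-α) := by
    intro s hs
    exact Real.rpow_nonneg (by linarith [hs.2]) _
  -- integrability of g * kernel
  have hg_meas : Measurable g := hgmono.measurable
  have hglhs_int : IntervalIntegrable (fun s => g s * (t - s) ^ (-α)) volume 0 t := by
    rw [intervalIntegrable_iff_integrableOn_Ioc_of_le ht0]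
    have hdom : IntegrableOn (fun s => max M 0 * (t - s) ^ (-α)) (Set.Ioc 0 t) volume := by
      have := (hpow_int.const_mul (max M 0))
      rwa [intervalIntegrable_iff_integrableOn_Ioc_of_le ht0] at this
    apply hdom.integrable.mono'
    · exact ((hg_meas.mul (by fun_prop : Measurable fun s : ℝ => (t - s) ^ (-α)))).aestronglyMeasurable
    · filter_upwards [ae_restrict_mem measurableSet_Ioc] with s hs
      have hs' : s ∈ Set.Icc (0:ℝ) t := ⟨hs.1.le, hs.2⟩
      have h0 : 0 ≤ g s := hg_nonneg s ⟨hs'.1, le_trans hs'.2 htT⟩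
      have h1 : 0 ≤ (t - s) ^ (-α) := hpow_nonneg s hs'
      rw [Real.norm_eq_abs, abs_of_nonneg (by positivity)]
      exact mul_le_mul_of_nonneg_right (hgM s) h1
  -- integrability of the comparison function
  have hcomp_int : IntervalIntegrable (fun s => S * Real.exp (lam * s) * (t - s) ^ (-α))
      volume 0 t := by
    apply hpow_int.continuousOn_mul
    exact (continuous_const.mul (Real.continuous_exp.comp (continuous_const.mul
      continuous_id))).continuousOn
  -- step 1: replace sSup by g inside integral
  have hcongr : (∫ s in (0:ℝ)..t, sSup ((fun u => |f u|) '' Set.Icc (-r) s) * (t - s) ^ (-α))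
      = ∫ s in (0:ℝ)..t, g s * (t - s) ^ (-α) := by
    apply intervalIntegral.integral_congr
    intro s hs
    rw [Set.uIcc_of_le ht0] at hs
    have : min s T = s := min_eq_left (le_trans hs.2 htT)
    simp only [hgdef, this]
  -- step 2: compare with comparison function
  have hmono : (∫ s in (0:ℝ)..t, g s * (t - s) ^ (-α))
      ≤ ∫ s in (0:ℝ)..t, S * Real.exp (lam * s) * (t - s) ^ (-α) := by
    apply intervalIntegral.integral_mono_on ht0 hglhs_int hcomp_int
    intro s hs
    have hsT : s ∈ Set.Icc (0:ℝ) T := ⟨hs.1, le_trans hs.2 htT⟩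
    exact mul_le_mul_of_nonneg_right (hg_le s hsT) (hpow_nonneg s hs)
  -- step 3: evaluate/bound the comparison integral
  set F : ℝ → ℝ := fun v => Real.exp (-(lam * v)) * v ^ (-α) with hFdef
  have hFint : IntegrableOn F (Set.Ioi (0:ℝ)) volume := by
    have hgam : IntegrableOn (fun x : ℝ => Real.exp (-x) * x ^ ((1 - α) - 1))
        (Set.Ioi (0:ℝ)) volume := Real.GammaIntegral_convergent (by linarith)
    apply hgam.integrable.mono'
    · exact (by fun_prop : Measurable F).aestronglyMeasurable
    · filter_upwards [ae_restrict_mem measurableSet_Ioi] with v hv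
      have hv0 : (0:ℝ) < v := hv
      have h1 : Real.exp (-(lam * v)) ≤ Real.exp (-v) := by
        apply Real.exp_le_exp.2; nlinarith
      have h2 : (0:ℝ) ≤ v ^ (-α) := Real.rpow_nonneg hv0.le _
      rw [hFdef, Real.norm_eq_abs, abs_of_nonneg (by positivity)]
      have : (1 - α) - 1 = -α := by ring
      rw [this]
      exact mul_le_mul_of_nonneg_right h1 h2
  have hFval : ∫ v in Set.Ioi (0:ℝ), F v = lam ^ (α - 1) * Real.Gamma (1 - α) := by
    have := Real.integral_rpow_mul_exp_neg_mul_Ioi (a := 1 - α) (r := lam)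
      (by linarith) hlam0
    have heq : ∫ v in Set.Ioi (0:ℝ), F v
        = ∫ v in Set.Ioi (0:ℝ), v ^ ((1 - α) - 1) * Real.exp (-(lam * v)) := by
      apply setIntegral_congr_fun measurableSet_Ioi
      intro v _
      simp only [hFdef]
      rw [mul_comm]
      congr 1
      norm_num
    rw [heq, this, one_div, ← Real.rpow_neg_one lam, ← Real.rpow_mul hlam0.le]
    congr 2
    ring
  have hFnonneg : 0 ≤ᵐ[volume.restrict (Set.Ioi (0:ℝ))] F := by
    filter_upwards [ae_restrict_mem measurableSet_Ioi] with v hv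
    have hv0 : (0:ℝ) < v := hv
    positivity
  have hF_interval_le : (∫ v in (0:ℝ)..t, F v) ≤ lam ^ (α - 1) * Real.Gamma (1 - α) := by
    rw [intervalIntegral.integral_of_le ht0, ← hFval]
    apply setIntegral_mono_set hFint hFnonneg
    exact HasSubset.Subset.eventuallyLE Set.Ioc_subset_Ioi_self
  -- step 4: rewrite comparison integral
  have hrw : Real.exp (-lam * t) * ∫ s in (0:ℝ)..t, S * Real.exp (lam * s) * (t - s) ^ (-α)
      = S * ∫ v in (0:ℝ)..t, F v := by
    have h1 : ∀ s : ℝ, Real.exp (-lam * t) * (S * Real.exp (lam * s) * (t - s) ^ (-α))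
        = S * F (t - s) := by
      intro s
      simp only [hFdef]
      have e1 : Real.exp (-lam * t) * (S * Real.exp (lam * s) * (t - s) ^ (-α))
          = S * (Real.exp (-lam * t) * Real.exp (lam * s) * (t - s) ^ (-α)) := by ring
      rw [e1, ← Real.exp_add]
      have e2 : -lam * t + lam * s = -(lam * (t - s)) := by ring
      rw [e2]
    calc Real.exp (-lam * t) * ∫ s in (0:ℝ)..t, S * Real.exp (lam * s) * (t - s) ^ (-α)
        = ∫ s in (0:ℝ)..t, Real.exp (-lam * t) * (S * Real.exp (lam * s) * (t - s) ^ (-α)) := by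
          rw [← intervalIntegral.integral_const_mul]
      _ = ∫ s in (0:ℝ)..t, S * F (t - s) := by
          apply intervalIntegral.integral_congr; intro s _; exact h1 s
      _ = S * ∫ s in (0:ℝ)..t, F (t - s) := by rw [← intervalIntegral.integral_const_mul]
      _ = S * ∫ v in (0:ℝ)..t, F v := by
          rw [intervalIntegral.integral_comp_sub_left F t]
          norm_num
  -- conclude
  calc Real.exp (-lam * t) *
        (∫ s in (0:ℝ)..t, sSup ((fun u => |f u|) '' Set.Icc (-r) s) * (t - s) ^ (-α))
      = Real.exp (-lam * t) * ∫ s in (0:ℝ)..t, g s * (t - s) ^ (-α) := by rw [hcongr]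
    _ ≤ Real.exp (-lam * t) * ∫ s in (0:ℝ)..t, S * Real.exp (lam * s) * (t - s) ^ (-α) :=
        mul_le_mul_of_nonneg_left hmono (Real.exp_pos _).le
    _ = S * ∫ v in (0:ℝ)..t, F v := hrw
    _ ≤ S * (lam ^ (α - 1) * Real.Gamma (1 - α)) :=
        mul_le_mul_of_nonneg_left hF_interval_le hS0
    _ = lam ^ (α - 1) * Real.Gamma (1 - α) * S := by ring
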